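/- Let Γ > 0 and α > 0. For every t ∈ [0,1], the series Φ_{0,0}(t)² + Σ_{n=1}^∞ Σ_{k=0}^{2^(n−1)−1} Φ_{n,k}(t)² converges and equals (Γ/(2α))·(1 − e^(−2αt)), the variance of the Ornstein–Uhlenbeck process started at 0 at time t. -/

import Mathlib

/-- The Haar-like basis element `Φ_{n,k}` for the Ornstein–Uhlenbeck process with
diffusion coefficient `Γ` and drift coefficient `α` (`Φ_{0,0}` for `n = 0`). -/
noncomputable def Phi (Γ α : ℝ) (n k : ℕ) (t : ℝ) : ℝ :=
  if n = 0 then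
    Real.sqrt (Γ / α) * Real.exp (-α / 2) * Real.sinh (α * t) / Real.sqrt (Real.sinh α)
  else if 2 * (k : ℝ) * 2 ^ (-(n : ℤ)) ≤ t ∧ t ≤ (2 * (k : ℝ) + 1) * 2 ^ (-(n : ℤ)) then
    Real.sqrt (Γ / α) * Real.sinh (α * (t - 2 * (k : ℝ) * 2 ^ (-(n : ℤ)))) /
      Real.sqrt (Real.sinh (α * 2 ^ (-(n : ℤ) + 1)))
  else if (2 * (k : ℝ) + 1) * 2 ^ (-(n : ℤ)) ≤ t ∧ t ≤ 2 * ((k : ℝ) + 1) * 2 ^ (-(n : ℤ)) then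
    Real.sqrt (Γ / α) * Real.sinh (α * (2 * ((k : ℝ) + 1) * 2 ^ (-(n : ℤ)) - t)) /
      Real.sqrt (Real.sinh (α * 2 ^ (-(n : ℤ) + 1)))
  else 0

open Real Filter Finset

/-- Core hyperbolic identity behind the telescoping. -/
lemma sinh_key (x u : ℝ) :
    Real.sinh x * Real.sinh (2*u - x) * Real.sinh u
      - Real.sinh x * Real.sinh (u - x) * Real.sinh (2*u)
      = Real.sinh x ^ 2 * Real.sinh u := by
  rw [Real.sinh_sub, Real.sinh_sub, Real.sinh_two_mul, Real.cosh_two_mul]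
  linear_combination Real.sinh x ^ 2 * Real.sinh u * Real.cosh_sq_sub_sinh_sq u

lemma key_div {u : ℝ} (hu : 0 < u) (x : ℝ) :
    Real.sinh x * Real.sinh (2*u - x) / Real.sinh (2*u)
      - Real.sinh x * Real.sinh (u - x) / Real.sinh u
      = Real.sinh x ^ 2 / Real.sinh (2*u) := by
  have h1 : (0:ℝ) < Real.sinh u := Real.sinh_pos_iff.mpr hu
  have h2 : (0:ℝ) < Real.sinh (2*u) := Real.sinh_pos_iff.mpr (by linarith)
  field_simp
  linear_combination sinh_key x u

lemma base_id (x y : ℝ) :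
    (1 - Real.exp (-(2*x)))/2 * Real.sinh y
      = Real.exp (-y) * Real.sinh x ^ 2 + Real.sinh x * Real.sinh (y - x) := by
  have hx : Real.exp (-(2*x)) = Real.exp (-x) * Real.exp (-x) := by
    rw [← Real.exp_add]; ring_nf
  rw [Real.sinh_sub, ← Real.cosh_sub_sinh y, hx, ← Real.cosh_sub_sinh x]
  linear_combination (-(Real.sinh y)/2) * Real.cosh_sq_sub_sinh_sq x

/-- Conditional variance of the OU process at `t` given its values on the dyadic
grid of mesh `2⁻ᵐ`. -/
noncomputable def Ev (Γ α t : ℝ) (m : ℕ) : ℝ :=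
  Γ / α * (Real.sinh (α * (t - (⌊t * 2 ^ m⌋₊ : ℝ) / 2 ^ m)) *
    Real.sinh (α * (((⌊t * 2 ^ m⌋₊ : ℝ) + 1) / 2 ^ m - t)) / Real.sinh (α / 2 ^ m))

lemma ev_base {Γ α t : ℝ} (hΓ : 0 < Γ) (hα : 0 < α) (ht0 : 0 ≤ t) (ht1 : t ≤ 1) :
    Phi Γ α 0 0 t ^ 2 = Γ / (2 * α) * (1 - Real.exp (-2 * α * t)) - Ev Γ α t 0 := by
  have hs : (0:ℝ) < Real.sinh α := Real.sinh_pos_iff.mpr hα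
  have hs' : Real.sinh α ≠ 0 := ne_of_gt hs
  have hsq : Phi Γ α 0 0 t ^ 2
      = Γ / α * Real.exp (-α) * Real.sinh (α * t) ^ 2 / Real.sinh α := by
    rw [Phi, if_pos rfl, div_pow, mul_pow, mul_pow, Real.sq_sqrt (by positivity),
      Real.sq_sqrt hs.le]
    have h : Real.exp (-α/2) ^ 2 = Real.exp (-α) := by
      rw [sq, ← Real.exp_add]; ring_nf
    rw [h]
  have hev : Ev Γ α t 0 = Γ / α * (Real.sinh (α * t) * Real.sinh (α * (1 - t)) / Real.sinh α) := by
    rcases eq_or_lt_of_le ht1 with h1 | h1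
    · subst h1; simp [Ev]
    · have hfl : ⌊t * 2 ^ (0:ℕ)⌋₊ = 0 := by
        rw [Nat.floor_eq_zero]; simpa using h1
      rw [Ev, hfl]
      norm_num
  rw [hsq, hev]
  have hid := base_id (α * t) α
  have harg : α - α * t = α * (1 - t) := by ring
  have h2 : -(2 * (α * t)) = -2 * α * t := by ring
  rw [harg, h2] at hid
  rw [eq_sub_iff_add_eq]
  have h1 : Γ / α * Real.exp (-α) * Real.sinh (α*t) ^ 2 / Real.sinh α
        + Γ / α * (Real.sinh (α*t) * Real.sinh (α*(1-t)) / Real.sinh α)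
      = Γ / α * ((Real.exp (-α) * Real.sinh (α*t) ^ 2
          + Real.sinh (α*t) * Real.sinh (α*(1-t))) / Real.sinh α) := by ring
  rw [h1, ← hid, mul_comm ((1 - Real.exp (-2*α*t)) / 2) (Real.sinh α),
    mul_div_cancel_left₀ _ hs']
  ring

set_option maxHeartbeats 1000000 in
lemma ev_step {Γ α t : ℝ} (hΓ : 0 < Γ) (hα : 0 < α) (ht0 : 0 ≤ t) (ht1 : t ≤ 1) (m : ℕ) :
    ∑ k ∈ Finset.range (2 ^ m), Phi Γ α (m+1) k t ^ 2 = Ev Γ α t m - Ev Γ α t (m+1) := by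
  have hP : (0:ℝ) < 2 ^ m := by positivity
  have hQ : (0:ℝ) < 2 * 2 ^ m := by positivity
  have h2P : (2:ℝ) ^ (m+1) = 2 * 2 ^ m := by ring
  have e1 : ((2:ℝ)) ^ (-((m+1:ℕ) : ℤ)) = ((2:ℝ) ^ (m+1))⁻¹ := by
    rw [zpow_neg, zpow_natCast]
  have e2 : ((2:ℝ)) ^ ((-((m+1:ℕ) : ℤ)) + 1) = ((2:ℝ) ^ m)⁻¹ := by
    have h : (-((m+1:ℕ) : ℤ)) + 1 = -(m : ℤ) := by push_cast; ring
    rw [h, zpow_neg, zpow_natCast]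
  have hinv1 : ∀ a b : ℝ, (a * ((2:ℝ) ^ (m+1))⁻¹ ≤ b ↔ a ≤ b * (2 * 2 ^ m)) := by
    intro a b; rw [h2P, ← div_eq_mul_inv, div_le_iff₀ hQ]
  have hinv2 : ∀ a b : ℝ, (a ≤ b * ((2:ℝ) ^ (m+1))⁻¹ ↔ a * (2 * 2 ^ m) ≤ b) := by
    intro a b; rw [h2P, ← div_eq_mul_inv, le_div_iff₀ hQ]
  set j : ℕ := ⌊t * 2 ^ m⌋₊ with hj
  have hfl : (j : ℝ) ≤ t * 2 ^ m := Nat.floor_le (by positivity)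
  have hfu : t * 2 ^ m < (j : ℝ) + 1 := Nat.lt_floor_add_one _
  have hjle : (j : ℝ) ≤ 2 ^ m := by nlinarith
  have hsinhm : (0:ℝ) < Real.sinh (α / 2 ^ m) := Real.sinh_pos_iff.mpr (by positivity)
  have hsq : ∀ x : ℝ, (Real.sqrt (Γ/α) * Real.sinh x / Real.sqrt (Real.sinh (α * ((2:ℝ)^m)⁻¹)))^2
      = Γ/α * Real.sinh x ^2 / Real.sinh (α / 2^m) := by
    intro x
    rw [div_pow, mul_pow, Real.sq_sqrt (by positivity), Real.sq_sqrt (by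
      rw [← div_eq_mul_inv]; exact hsinhm.le), ← div_eq_mul_inv]
  rcases lt_or_eq_of_le hjle with hjlt | hjeq
  · -- main case : (j:ℝ) < 2^m
    have hjnat : j < 2 ^ m := by exact_mod_cast hjlt
    rw [Finset.sum_eq_single j]
    rotate_left
    · intro k _ hkj
      rcases lt_or_gt_of_ne hkj with hk | hk
      · -- k < j
        have hk1 : ((k:ℝ) + 1) ≤ (j:ℝ) := by exact_mod_cast hk
        rw [Phi, if_neg (Nat.succ_ne_zero m)]
        split_ifs with h1 h2
        · exfalso
          have h3 := (hinv2 t (2 * (k:ℝ) + 1)).mp h1.2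
          nlinarith
        · have hup := (hinv2 t (2 * ((k:ℝ) + 1))).mp h2.2
          have hdown : 2 * ((k:ℝ) + 1) * ((2:ℝ) ^ (m+1))⁻¹ ≤ t := by
            rw [hinv1]; nlinarith
          have heq : α * (2 * ((k:ℝ) + 1) * ((2:ℝ) ^ (m+1))⁻¹ - t) = 0 := by
            have h5 : 2 * ((k:ℝ) + 1) * ((2:ℝ) ^ (m+1))⁻¹ = t :=
              le_antisymm hdown ((hinv2 t (2 * ((k:ℝ) + 1))).mpr hup)
            rw [h5, sub_self, mul_zero]
          rw [e1, heq, Real.sinh_zero, mul_zero, zero_div]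
          norm_num
        · norm_num
      · -- k > j
        have hk1 : (j:ℝ) + 1 ≤ (k:ℝ) := by exact_mod_cast hk
        rw [Phi, if_neg (Nat.succ_ne_zero m)]
        split_ifs with h1 h2
        · exfalso
          have h3 := (hinv1 (2 * (k:ℝ)) t).mp h1.1
          nlinarith
        · exfalso
          have h3 := (hinv1 (2 * (k:ℝ) + 1) t).mp h2.1
          nlinarith
        · norm_num
    · intro h
      exact absurd (Finset.mem_range.mpr hjnat) h
    -- single remaining term
    have hcond1a : 2 * (j:ℝ) * ((2:ℝ) ^ (m+1))⁻¹ ≤ t := by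
      rw [hinv1]; nlinarith
    rcases lt_trichotomy (t * (2 * 2 ^ m)) (2 * (j:ℝ) + 1) with hmid | hmid | hmid
    · -- strictly left of midpoint
      have hfl1 : ⌊t * 2 ^ (m+1)⌋₊ = 2 * j := by
        rw [Nat.floor_eq_iff (by positivity)]
        rw [h2P]
        constructor
        · push_cast; nlinarith
        · push_cast; nlinarith
      have hcond1b : t ≤ (2 * (j:ℝ) + 1) * ((2:ℝ) ^ (m+1))⁻¹ := by
        rw [hinv2]; exact hmid.le
      rw [Phi, if_neg (Nat.succ_ne_zero m),
        if_pos ⟨by rw [e1]; exact hcond1a, by rw [e1]; exact hcond1b⟩]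
      rw [e1, e2, hsq]
      rw [Ev, Ev, ← hj, hfl1]
      have hu : (0:ℝ) < α / 2 ^ (m+1) := by positivity
      have a1 : α * (t - 2 * (j:ℝ) * ((2:ℝ) ^ (m+1))⁻¹) = α * (t - (j:ℝ) / 2 ^ m) := by
        rw [h2P]; first
        | (field_simp; ring)
        | field_simp
      have a2 : α * (((j:ℝ) + 1) / 2 ^ m - t)
          = 2 * (α / 2 ^ (m+1)) - α * (t - (j:ℝ) / 2 ^ m) := by
        rw [h2P]; first
        | (field_simp; ring)
        | field_simp
      have a3 : α * (t - ((2 * j : ℕ):ℝ) / 2 ^ (m+1)) = α * (t - (j:ℝ) / 2 ^ m) := by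
        push_cast; rw [h2P]; first
        | (field_simp; ring)
        | field_simp
      have a4 : α * ((((2 * j : ℕ):ℝ) + 1) / 2 ^ (m+1) - t)
          = (α / 2 ^ (m+1)) - α * (t - (j:ℝ) / 2 ^ m) := by
        push_cast; rw [h2P]; first
        | (field_simp; ring)
        | field_simp
      have a5 : α / 2 ^ m = 2 * (α / 2 ^ (m+1)) := by
        rw [h2P]; first
        | (field_simp; ring)
        | field_simp
      rw [a1, a2, a3, a4, a5]
      have hk := key_div hu (α * (t - (j:ℝ) / 2 ^ m))
      linear_combination (-(Γ/α)) * hk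
    · -- exactly the midpoint
      have htmid : t = (2 * (j:ℝ) + 1) / (2 * 2 ^ m) := by
        rw [eq_div_iff (ne_of_gt hQ)]; linarith
      have hfl1 : ⌊t * 2 ^ (m+1)⌋₊ = 2 * j + 1 := by
        rw [Nat.floor_eq_iff (by positivity), h2P]
        constructor
        · push_cast; linarith
        · push_cast; linarith
      have hcond1b : t ≤ (2 * (j:ℝ) + 1) * ((2:ℝ) ^ (m+1))⁻¹ := by
        rw [hinv2]; exact hmid.le
      rw [Phi, if_neg (Nat.succ_ne_zero m),
        if_pos ⟨by rw [e1]; exact hcond1a, by rw [e1]; exact hcond1b⟩]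
      rw [e1, e2, hsq]
      rw [Ev, Ev, ← hj, hfl1]
      have b1 : α * (t - ((2 * j + 1 : ℕ):ℝ) / 2 ^ (m+1)) = 0 := by
        push_cast; rw [h2P, htmid]; field_simp; ring
      have b2 : α * (t - 2 * (j:ℝ) * ((2:ℝ) ^ (m+1))⁻¹) = α / (2 * 2 ^ m) := by
        rw [h2P, htmid]; first
        | (field_simp; ring)
        | field_simp
      have b3 : α * (t - (j:ℝ) / 2 ^ m) = α / (2 * 2 ^ m) := by
        rw [htmid]; first
        | (field_simp; ring)
        | field_simp
      have b4 : α * (((j:ℝ) + 1) / 2 ^ m - t) = α / (2 * 2 ^ m) := by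
        rw [htmid]; first
        | (field_simp; ring)
        | field_simp
      have b5 : α / 2 ^ m = 2 * (α / (2 * 2 ^ m)) := by
        first
        | (field_simp; ring)
        | field_simp
      have b6 : α / 2 ^ (m+1) = α / (2 * 2 ^ m) := by rw [h2P]
      rw [b1, b2, b3, b4, b5, b6, Real.sinh_zero, zero_mul, zero_div, mul_zero, sub_zero, sq]
      have hs2 : Real.sinh (2 * (α / (2 * 2 ^ m))) ≠ 0 := by
        refine ne_of_gt (Real.sinh_pos_iff.mpr ?_); positivity
      ring
    · -- strictly right of midpoint
      have hfl1 : ⌊t * 2 ^ (m+1)⌋₊ = 2 * j + 1 := by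
        rw [Nat.floor_eq_iff (by positivity), h2P]
        constructor
        · push_cast; linarith
        · push_cast; nlinarith
      have hcond1bneg : ¬ (t ≤ (2 * (j:ℝ) + 1) * ((2:ℝ) ^ (m+1))⁻¹) := by
        rw [hinv2]; push_neg; exact hmid
      have hcond2a : (2 * (j:ℝ) + 1) * ((2:ℝ) ^ (m+1))⁻¹ ≤ t := by
        rw [hinv1]; exact hmid.le
      have hcond2b : t ≤ 2 * ((j:ℝ) + 1) * ((2:ℝ) ^ (m+1))⁻¹ := by
        rw [hinv2]; nlinarith
      rw [Phi, if_neg (Nat.succ_ne_zero m),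
        if_neg (by rw [e1]; exact fun h => hcond1bneg h.2),
        if_pos ⟨by rw [e1]; exact hcond2a, by rw [e1]; exact hcond2b⟩]
      rw [e1, e2, hsq]
      rw [Ev, Ev, ← hj, hfl1]
      have hu : (0:ℝ) < α / 2 ^ (m+1) := by positivity
      have c1 : α * (2 * ((j:ℝ) + 1) * ((2:ℝ) ^ (m+1))⁻¹ - t)
          = α * (((j:ℝ) + 1) / 2 ^ m - t) := by
        rw [h2P]; first
        | (field_simp; ring)
        | field_simp
      have c2 : α * (t - (j:ℝ) / 2 ^ m)
          = 2 * (α / 2 ^ (m+1)) - α * (((j:ℝ) + 1) / 2 ^ m - t) := by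
        rw [h2P]; first
        | (field_simp; ring)
        | field_simp
      have c3 : α * (t - ((2 * j + 1 : ℕ):ℝ) / 2 ^ (m+1))
          = (α / 2 ^ (m+1)) - α * (((j:ℝ) + 1) / 2 ^ m - t) := by
        push_cast; rw [h2P]; first
        | (field_simp; ring)
        | field_simp
      have c4 : α * ((((2 * j + 1 : ℕ):ℝ) + 1) / 2 ^ (m+1) - t)
          = α * (((j:ℝ) + 1) / 2 ^ m - t) := by
        push_cast; rw [h2P]; first
        | (field_simp; ring)
        | field_simp
      have a5 : α / 2 ^ m = 2 * (α / 2 ^ (m+1)) := by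
        rw [h2P]; first
        | (field_simp; ring)
        | field_simp
      rw [c1, c2, c3, c4, a5]
      have hk := key_div hu (α * (((j:ℝ) + 1) / 2 ^ m - t))
      linear_combination (-(Γ/α)) * hk
  · -- edge case : j = 2^m, i.e. t = 1
    have hte : t = 1 := by
      have h1 : (1:ℝ) ≤ t := by nlinarith [hjeq.symm ▸ hfl]
      linarith
    subst hte
    have hj2 : (j:ℝ) = 2 ^ m := hjeq
    have hfl1 : ⌊(1:ℝ) * 2 ^ (m+1)⌋₊ = 2 ^ (m+1) := by
      rw [one_mul]
      rw [Nat.floor_eq_iff (by positivity)]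
      constructor
      · push_cast; norm_num
      · push_cast; norm_num
    have hEm : Ev Γ α 1 m = 0 := by
      rw [Ev, ← hj]
      rw [show α * (1 - (j:ℝ) / (2:ℝ) ^ m) = 0 by rw [hj2]; field_simp; ring]
      rw [Real.sinh_zero, zero_mul, zero_div, mul_zero]
    have hEm1 : Ev Γ α 1 (m+1) = 0 := by
      rw [Ev, hfl1]
      rw [show α * (1 - ((2 ^ (m+1) : ℕ):ℝ) / (2:ℝ) ^ (m+1)) = 0 by push_cast; field_simp; ring]
      rw [Real.sinh_zero, zero_mul, zero_div, mul_zero]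
    rw [hEm, hEm1, sub_zero]
    apply Finset.sum_eq_zero
    intro k hk
    have hklt : (k:ℝ) + 1 ≤ 2 ^ m := by
      exact_mod_cast Nat.succ_le_of_lt (Finset.mem_range.mp hk)
    rw [Phi, if_neg (Nat.succ_ne_zero m)]
    split_ifs with h1 h2
    · exfalso
      have h3 := (hinv2 1 (2 * (k:ℝ) + 1)).mp h1.2
      linarith
    · have h3 := (hinv2 1 (2 * ((k:ℝ) + 1))).mp h2.2
      have hk2 : (k:ℝ) + 1 = 2 ^ m := by linarith
      rw [e1, show α * (2 * ((k:ℝ) + 1) * ((2:ℝ) ^ (m+1))⁻¹ - 1) = 0 from by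
        rw [h2P, hk2]; field_simp; ring]
      rw [Real.sinh_zero, mul_zero, zero_div, sq, mul_zero]
    · rw [sq, mul_zero]

/-- For every `t ∈ [0,1]`, the series `Φ_{0,0}(t)² + Σ_{n=1}^∞ Σ_{k=0}^{2^(n−1)−1} Φ_{n,k}(t)²`
(grouped by levels `n`; note `Finset.range (2 ^ (0 - 1)) = {0}` so the `n = 0` term is
`Φ_{0,0}(t)²`) converges and equals `(Γ/(2α))·(1 − e^(−2αt))`, the variance of the
Ornstein–Uhlenbeck process started at `0` at time `t`. -/
theorem ou_variance (Γ α : ℝ) (hΓ : 0 < Γ) (hα : 0 < α)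
    (t : ℝ) (ht : t ∈ Set.Icc (0 : ℝ) 1) :
    HasSum (fun n : ℕ => ∑ k ∈ Finset.range (2 ^ (n - 1)), (Phi Γ α n k t) ^ 2)
      (Γ / (2 * α) * (1 - Real.exp (-2 * α * t))) := by
  obtain ⟨ht0, ht1⟩ := ht
  set f : ℕ → ℝ := fun n => ∑ k ∈ Finset.range (2 ^ (n - 1)), (Phi Γ α n k t) ^ 2 with hf
  have hnn : ∀ n, 0 ≤ f n := fun n => Finset.sum_nonneg fun k _ => sq_nonneg _
  have hpartial : ∀ N : ℕ, ∑ n ∈ Finset.range (N+1), f n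
      = Γ / (2 * α) * (1 - Real.exp (-2 * α * t)) - Ev Γ α t N := by
    intro N
    induction N with
    | zero =>
      rw [Finset.sum_range_one]
      have : f 0 = Phi Γ α 0 0 t ^ 2 := by
        rw [hf]; norm_num
      rw [this, ev_base hΓ hα ht0 ht1]
    | succ N ih =>
      rw [Finset.sum_range_succ, ih]
      have : f (N+1) = ∑ k ∈ Finset.range (2 ^ N), Phi Γ α (N+1) k t ^ 2 := by
        rw [hf]; norm_num
      rw [this, ev_step hΓ hα ht0 ht1 N]
      ring
  -- Ev bounds
  have hP : ∀ m : ℕ, (0:ℝ) < 2 ^ m := fun m => by positivity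
  have hEv0 : ∀ m : ℕ, 0 ≤ Ev Γ α t m := by
    intro m
    have h1 : (⌊t * 2 ^ m⌋₊ : ℝ) / 2 ^ m ≤ t := by
      rw [div_le_iff₀ (hP m)]
      exact Nat.floor_le (by positivity)
    have h2 : t ≤ ((⌊t * 2 ^ m⌋₊ : ℝ) + 1) / 2 ^ m := by
      rw [le_div_iff₀ (hP m)]
      exact (Nat.lt_floor_add_one (t * 2 ^ m)).le
    have hs : (0:ℝ) < Real.sinh (α / 2 ^ m) := Real.sinh_pos_iff.mpr (by positivity)
    have hn1 : 0 ≤ α * (t - (⌊t * 2 ^ m⌋₊ : ℝ) / 2 ^ m) := by nlinarith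
    have hn2 : 0 ≤ α * (((⌊t * 2 ^ m⌋₊ : ℝ) + 1) / 2 ^ m - t) := by nlinarith
    apply mul_nonneg (by positivity)
    exact div_nonneg (mul_nonneg (Real.sinh_nonneg_iff.mpr hn1)
      (Real.sinh_nonneg_iff.mpr hn2)) hs.le
  have hEvle : ∀ m : ℕ, Ev Γ α t m ≤ Γ / α * Real.sinh (α / 2 ^ m) := by
    intro m
    have h1 : (⌊t * 2 ^ m⌋₊ : ℝ) / 2 ^ m ≤ t := by
      rw [div_le_iff₀ (hP m)]
      exact Nat.floor_le (by positivity)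
    have h2 : t ≤ ((⌊t * 2 ^ m⌋₊ : ℝ) + 1) / 2 ^ m := by
      rw [le_div_iff₀ (hP m)]
      exact (Nat.lt_floor_add_one (t * 2 ^ m)).le
    have hs : (0:ℝ) < Real.sinh (α / 2 ^ m) := Real.sinh_pos_iff.mpr (by positivity)
    have hy : (⌊t * 2 ^ m⌋₊ : ℝ) / 2 ^ m * 2 ^ m = (⌊t * 2 ^ m⌋₊ : ℝ) :=
      div_mul_cancel₀ _ (ne_of_gt (hP m))
    have hy2 : ((⌊t * 2 ^ m⌋₊ : ℝ) + 1) / 2 ^ m * 2 ^ m = (⌊t * 2 ^ m⌋₊ : ℝ) + 1 :=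
      div_mul_cancel₀ _ (ne_of_gt (hP m))
    have hfl : (⌊t * 2 ^ m⌋₊ : ℝ) ≤ t * 2 ^ m := Nat.floor_le (by positivity)
    have hfu : t * 2 ^ m ≤ (⌊t * 2 ^ m⌋₊ : ℝ) + 1 := (Nat.lt_floor_add_one (t * 2 ^ m)).le
    have b1 : Real.sinh (α * (t - (⌊t * 2 ^ m⌋₊ : ℝ) / 2 ^ m)) ≤ Real.sinh (α / 2 ^ m) := by
      apply Real.sinh_le_sinh.mpr
      rw [le_div_iff₀ (hP m)]
      nlinarith [hP m, hα.le]
    have b2 : Real.sinh (α * (((⌊t * 2 ^ m⌋₊ : ℝ) + 1) / 2 ^ m - t)) ≤ Real.sinh (α / 2 ^ m) := by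
      apply Real.sinh_le_sinh.mpr
      rw [le_div_iff₀ (hP m)]
      nlinarith [hP m, hα.le]
    have n1 : 0 ≤ Real.sinh (α * (t - (⌊t * 2 ^ m⌋₊ : ℝ) / 2 ^ m)) :=
      Real.sinh_nonneg_iff.mpr (by nlinarith)
    have n2 : 0 ≤ Real.sinh (α * (((⌊t * 2 ^ m⌋₊ : ℝ) + 1) / 2 ^ m - t)) :=
      Real.sinh_nonneg_iff.mpr (by nlinarith)
    rw [Ev]
    apply mul_le_mul_of_nonneg_left _ (by positivity : (0:ℝ) ≤ Γ / α)
    rw [div_le_iff₀ hs]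
    nlinarith
  have hlim : Tendsto (fun m : ℕ => Ev Γ α t m) atTop (nhds 0) := by
    apply squeeze_zero hEv0 hEvle
    have h1 : Tendsto (fun m : ℕ => α / (2:ℝ) ^ m) atTop (nhds 0) := by
      have := tendsto_pow_atTop_nhds_zero_of_lt_one
        (by norm_num : (0:ℝ) ≤ 1/2) (by norm_num : (1:ℝ)/2 < 1)
      have h2 := this.const_mul α
      rw [mul_zero] at h2
      convert h2 using 2 with m
      rw [div_pow, one_pow, div_eq_mul_inv, mul_comm α, mul_comm _ α, ← div_eq_mul_inv]
      ring_nf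
    have h3 : Tendsto (fun m : ℕ => Real.sinh (α / 2 ^ m)) atTop (nhds 0) := by
      have := (Real.continuous_sinh.tendsto 0).comp h1
      simpa [Function.comp_def] using this
    have h4 := h3.const_mul (Γ / α)
    rw [mul_zero] at h4
    exact h4
  rw [hasSum_iff_tendsto_nat_of_nonneg hnn]
  have hshift : Tendsto (fun N : ℕ => ∑ n ∈ Finset.range (N+1), f n) atTop
      (nhds (Γ / (2 * α) * (1 - Real.exp (-2 * α * t)))) := by
    simp only [hpartial]
    have h5 : Tendsto (fun N : ℕ => Γ / (2 * α) * (1 - Real.exp (-2 * α * t)) - Ev Γ α t N)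
        atTop (nhds (Γ / (2 * α) * (1 - Real.exp (-2 * α * t)) - 0)) :=
      tendsto_const_nhds.sub hlim
    rw [sub_zero] at h5
    exact h5
  exact (tendsto_add_atTop_iff_nat 1).mp hshift
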